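/- max over 0 < t < 1/2 of 3·sin⁴(πt)/(π⁴t³) is strictly greater than 0.495. -/

import Mathlib

open Real

lemma sin27_lb : (0.75009 : ℝ) < Real.sin (Real.pi * (27 / 100)) := by
  have hpiL := Real.pi_gt_d6
  have hpiU := Real.pi_lt_d6
  have hsplit : Real.pi * (27 / 100) = Real.pi / 4 + Real.pi / 50 := by ring
  rw [hsplit, Real.sin_add, Real.sin_pi_div_four, Real.cos_pi_div_four]
  set y : ℝ := Real.pi / 50 with hy
  have hyL : (0.0628318 : ℝ) < y := by rw [hy]; norm_num at hpiL ⊢; linarith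
  have hyU : y < (0.0628319 : ℝ) := by rw [hy]; norm_num at hpiU ⊢; linarith
  have hy0 : 0 < y := by linarith
  have hy1 : y ≤ 1 := by linarith
  have hsin : y - y ^ 3 / 4 < Real.sin y := by
    have := Real.sin_gt_sub_cube hy0
    linarith [pow_pos hy0 3]
  have hcos : |Real.cos y - (1 - y ^ 2 / 2)| ≤ |y| ^ 4 * (5 / 96) :=
    Real.cos_bound (by rw [abs_of_pos hy0]; linarith)
  rw [abs_of_pos hy0] at hcos
  have hcos' : 1 - y ^ 2 / 2 - y ^ 4 * (5 / 96) ≤ Real.cos y := by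
    have := (abs_le.mp hcos).1
    linarith
  have hy2 : y ^ 2 < (0.0628319 : ℝ) ^ 2 := by nlinarith
  have hy3 : y ^ 3 < (0.0628319 : ℝ) ^ 3 := by nlinarith
  have hy4 : y ^ 4 < (0.0628319 : ℝ) ^ 4 := by nlinarith
  have hsinL : (0.062769 : ℝ) < Real.sin y := by nlinarith
  have hcosL : (0.998025 : ℝ) < Real.cos y := by nlinarith
  have hs2 : (1.4142135 : ℝ) < Real.sqrt 2 := by
    have : ((1.4142135 : ℝ)) ^ 2 < 2 := by norm_num
    nlinarith [Real.sq_sqrt (by norm_num : (2:ℝ) ≥ 0), Real.sqrt_nonneg 2]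
  have hs2' : 0 < Real.sqrt 2 := by linarith
  nlinarith [mul_pos hs2' (show (0:ℝ) < Real.cos y + Real.sin y by linarith)]

lemma f27_lb : (0.495 : ℝ) <
    3 * Real.sin (Real.pi * (27 / 100)) ^ 4 / (Real.pi ^ 4 * (27 / 100) ^ 3) := by
  have hpiU := Real.pi_lt_d6
  have hpi0 := Real.pi_pos
  have hden : (0 : ℝ) < Real.pi ^ 4 * (27 / 100) ^ 3 := by positivity
  rw [lt_div_iff₀ hden]
  have hs := sin27_lb
  have hs4 : (0.75009 : ℝ) ^ 4 < Real.sin (Real.pi * (27 / 100)) ^ 4 :=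
    pow_lt_pow_left₀ hs (by norm_num) (by norm_num)
  have hpi4 : Real.pi ^ 4 < (3.141593 : ℝ) ^ 4 :=
    pow_lt_pow_left₀ hpiU hpi0.le (by norm_num)
  nlinarith

theorem gamma_four_lower_bound :
    ∃ t : ℝ, 0 < t ∧ t < 1 / 2 ∧
      (∀ s : ℝ, 0 < s → s < 1 / 2 →
        3 * Real.sin (Real.pi * s) ^ 4 / (Real.pi ^ 4 * s ^ 3) ≤
          3 * Real.sin (Real.pi * t) ^ 4 / (Real.pi ^ 4 * t ^ 3)) ∧
      0.495 < 3 * Real.sin (Real.pi * t) ^ 4 / (Real.pi ^ 4 * t ^ 3) := by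
  have hpi0 := Real.pi_pos
  set f : ℝ → ℝ := fun s => 3 * Real.sin (Real.pi * s) ^ 4 / (Real.pi ^ 4 * s ^ 3) with hf
  have hcont : ContinuousOn f (Set.Icc (1/10 : ℝ) (1/2)) := by
    apply ContinuousOn.div
    · fun_prop
    · fun_prop
    · intro x hx
      have hx0 : (0:ℝ) < x := lt_of_lt_of_le (by norm_num) hx.1
      positivity
  obtain ⟨t, htmem, hmax⟩ := (isCompact_Icc :
      IsCompact (Set.Icc (1/10 : ℝ) (1/2))).exists_isMaxOn
    ⟨(27/100 : ℝ), by norm_num⟩ hcont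
  have h27 : f (27/100) ≤ f t := hmax (by norm_num)
  have hft : (0.495 : ℝ) < f t := lt_of_lt_of_le f27_lb h27
  have ht0 : 0 < t := lt_of_lt_of_le (by norm_num) htmem.1
  have htlt : t < 1/2 := by
    rcases lt_or_eq_of_le htmem.2 with h | h
    · exact h
    · exfalso
      have hpiL := Real.pi_gt_d6
      have : f t = 24 / Real.pi ^ 4 := by
        rw [hf, h]
        show 3 * Real.sin (Real.pi * (1/2)) ^ 4 / (Real.pi ^ 4 * (1/2) ^ 3) = _
        rw [show Real.pi * (1/2) = Real.pi / 2 by ring, Real.sin_pi_div_two]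
        field_simp
        ring
      rw [this] at hft
      have h3 : (3 : ℝ) < Real.pi := by linarith
      have h9 : (9 : ℝ) < Real.pi ^ 2 := by nlinarith
      have hpi4 : (81 : ℝ) < Real.pi ^ 4 := by nlinarith
      have : 24 / Real.pi ^ 4 < 24 / 81 := by
        apply div_lt_div_of_pos_left <;> norm_num <;> linarith
      norm_num at this
      linarith
  refine ⟨t, ht0, htlt, ?_, hft⟩
  intro s hs0 hs2
  by_cases hs : (1/10 : ℝ) ≤ s
  · exact hmax ⟨hs, hs2.le⟩
  · push_neg at hs
    -- small s : f s ≤ 3 s ≤ 0.3 < f t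
    have hx0 : 0 < Real.pi * s := by positivity
    have hx1 : Real.pi * s < 1 := by
      have := Real.pi_lt_d2
      nlinarith
    have hsin_pos : 0 < Real.sin (Real.pi * s) :=
      Real.sin_pos_of_pos_of_lt_pi hx0 (by nlinarith)
    have hsin_lt : Real.sin (Real.pi * s) < Real.pi * s := Real.sin_lt hx0
    have hsin4 : Real.sin (Real.pi * s) ^ 4 ≤ (Real.pi * s) ^ 4 :=
      (pow_le_pow_left₀ hsin_pos.le hsin_lt.le 4)
    have hden : (0 : ℝ) < Real.pi ^ 4 * s ^ 3 := by positivity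
    have hfs : f s ≤ 3 * s := by
      rw [hf, div_le_iff₀ hden]
      have : 3 * (Real.pi * s) ^ 4 = 3 * s * (Real.pi ^ 4 * s ^ 3) := by ring
      nlinarith
    have : 3 * s ≤ (0.3 : ℝ) := by linarith
    calc f s ≤ 3 * s := hfs
      _ ≤ 0.3 := this
      _ ≤ f t := by linarith
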